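/- With data z_t, z'_t ∈ ℝ^{D_z}, g_t ∈ ℝ (t = 1,…,T), α ∈ [0,1), parameters ξ ∈ ℝ^K, m_1,…,m_K ∈ ℝ^{D_z}, positive-definite symmetric C_1,…,C_K, let Q be the associated GMM Q-function, δ_t := g_t + α Q(z'_t) − Q(z_t), and for fixed k let B_{tk} := α (z'_t − m_k)(z'_t − m_k)ᵀ 𝒢(z'_t | m_k, C_k) − (z_t − m_k)(z_t − m_k)ᵀ 𝒢(z_t | m_k, C_k). Define G_k := Σ_{t=1}^T 4 δ_t ξ_k [ C_k^{−1} B_{tk} + B_{tk} C_k^{−1} ]. Then: (a) G_k is symmetric; and (b) G_k is the Riemannian gradient of ℒ with respect to C_k under the Bures–Wasserstein metric, i.e., for every symmetric matrix Γ, (1/2) tr( L_{C_k}(G_k) Γ ) equals the directional derivative of ℒ (as a function of C_k alone) at C_k along Γ. -/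

import Mathlib

open Matrix

/-- The Gaussian kernel `𝒢(z | m, C) := exp(−(z − m)ᵀ C⁻¹ (z − m))`. -/
noncomputable def gaussKer {D : ℕ} (z m : Fin D → ℝ) (C : Matrix (Fin D) (Fin D) ℝ) : ℝ :=
  Real.exp (-((z - m) ⬝ᵥ (C⁻¹ *ᵥ (z - m))))

/-- The GMM Q-function `Q(z) := Σ_k ξ_k 𝒢(z | m_k, C_k)`. -/
noncomputable def gmmQ {D K : ℕ} (ξ : Fin K → ℝ) (m : Fin K → Fin D → ℝ)
    (C : Fin K → Matrix (Fin D) (Fin D) ℝ) (z : Fin D → ℝ) : ℝ :=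
  ∑ k, ξ k * gaussKer z (m k) (C k)

/-- The Bellman-residual objective `ℒ := Σ_t (g_t + α Q(z'_t) − Q(z_t))²`. -/
noncomputable def bellmanLoss {D K T : ℕ} (g : Fin T → ℝ) (z z' : Fin T → Fin D → ℝ)
    (α : ℝ) (ξ : Fin K → ℝ) (m : Fin K → Fin D → ℝ)
    (C : Fin K → Matrix (Fin D) (Fin D) ℝ) : ℝ :=
  ∑ t, (g t + α * gmmQ ξ m C (z' t) - gmmQ ξ m C (z t)) ^ 2

attribute [local instance] Matrix.normedAddCommGroup Matrix.normedSpace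

open Asymptotics Topology Filter

set_option maxHeartbeats 1000000

section Aux

variable {n : ℕ}

private lemma mat_norm_mul_le (X Y : Matrix (Fin n) (Fin n) ℝ) :
    ‖X * Y‖ ≤ n * ‖X‖ * ‖Y‖ := by
  have h0 : (0:ℝ) ≤ n * ‖X‖ * ‖Y‖ := by positivity
  rw [Matrix.norm_le_iff h0]
  intro i j
  calc ‖(X * Y) i j‖ = |∑ l, X i l * Y l j| := rfl
    _ ≤ ∑ l, |X i l * Y l j| := Finset.abs_sum_le_sum_abs _ _
    _ ≤ ∑ _l : Fin n, ‖X‖ * ‖Y‖ := by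
        refine Finset.sum_le_sum fun l _ => ?_
        rw [abs_mul]
        exact mul_le_mul (X.norm_entry_le_entrywise_sup_norm)
          (Y.norm_entry_le_entrywise_sup_norm) (abs_nonneg _) (norm_nonneg _)
    _ = n * ‖X‖ * ‖Y‖ := by simp [mul_assoc]

private lemma hasFDerivAt_matrix_inv (A : Matrix (Fin n) (Fin n) ℝ)
    (hA : A.det ≠ 0)
    (L : Matrix (Fin n) (Fin n) ℝ →L[ℝ] Matrix (Fin n) (Fin n) ℝ)
    (hL : ∀ H, L H = -(A⁻¹ * H * A⁻¹)) :
    HasFDerivAt (fun M : Matrix (Fin n) (Fin n) ℝ => M⁻¹) L A := by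
  have hAinv' : A * A⁻¹ = 1 := Matrix.mul_nonsing_inv A (isUnit_iff_ne_zero.mpr hA)
  have hdet : ContinuousAt (fun M : Matrix (Fin n) (Fin n) ℝ => M.det) A :=
    (continuous_id.matrix_det).continuousAt
  have hinv_cont : ContinuousAt (fun M : Matrix (Fin n) (Fin n) ℝ => M⁻¹) A := by
    apply continuousAt_matrix_inv
    rw [Ring.inverse_eq_inv']
    exact continuousAt_inv₀ hA
  have hev : ∀ᶠ M in 𝓝 A, (M : Matrix (Fin n) (Fin n) ℝ).det ≠ 0 :=
    hdet.eventually_ne hA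
  have key : ∀ M : Matrix (Fin n) (Fin n) ℝ, M.det ≠ 0 →
      M⁻¹ - A⁻¹ - L (M - A) = (A⁻¹ - M⁻¹) * (M - A) * A⁻¹ := by
    intro M hM
    have h1 : M⁻¹ * M = 1 := Matrix.nonsing_inv_mul M (isUnit_iff_ne_zero.mpr hM)
    rw [hL]
    have : M⁻¹ - A⁻¹ = -(M⁻¹ * (M - A) * A⁻¹) := by
      rw [Matrix.mul_sub, Matrix.sub_mul, h1, Matrix.mul_assoc, hAinv', Matrix.mul_one,
        Matrix.one_mul]
      abel
    rw [this]
    rw [Matrix.sub_mul, Matrix.sub_mul]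
    abel
  apply HasFDerivAt.of_isLittleO
  have ho : (fun M : Matrix (Fin n) (Fin n) ℝ => (A⁻¹ - M⁻¹) * (M - A) * A⁻¹)
      =o[𝓝 A] fun M => M - A := by
    rw [isLittleO_iff]
    intro c hc
    set κ : ℝ := (n * (n * 1 * ‖A⁻¹‖) + 1) with hκ
    have hκpos : 0 < κ := by positivity
    have htend : Tendsto (fun M : Matrix (Fin n) (Fin n) ℝ => A⁻¹ - M⁻¹) (𝓝 A) (𝓝 0) := by
      have := (tendsto_const_nhds (x := A⁻¹)).sub hinv_cont.tendsto
      simpa using this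
    have hball : ∀ᶠ M in 𝓝 A, ‖A⁻¹ - M⁻¹‖ < c / κ := by
      have := htend (Metric.ball_mem_nhds 0 (div_pos hc hκpos))
      filter_upwards [this] with M hM
      simpa [mem_ball_zero_iff] using hM
    filter_upwards [hball] with M hM
    have h1 : ‖(A⁻¹ - M⁻¹) * (M - A) * A⁻¹‖ ≤ n * (n * ‖A⁻¹ - M⁻¹‖ * ‖M - A‖) * ‖A⁻¹‖ := by
      calc ‖(A⁻¹ - M⁻¹) * (M - A) * A⁻¹‖ ≤ ↑n * ‖(A⁻¹ - M⁻¹) * (M - A)‖ * ‖A⁻¹‖ :=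
            mat_norm_mul_le _ _
        _ ≤ ↑n * (↑n * ‖A⁻¹ - M⁻¹‖ * ‖M - A‖) * ‖A⁻¹‖ :=
            mul_le_mul_of_nonneg_right
              (mul_le_mul_of_nonneg_left
                (by
                  have h := mat_norm_mul_le (A⁻¹ - M⁻¹) (M - A)
                  linarith [h]) (Nat.cast_nonneg (α := ℝ) n)) (norm_nonneg _)
    have h2 : n * (n * ‖A⁻¹ - M⁻¹‖ * ‖M - A‖) * ‖A⁻¹‖ ≤ κ * ‖A⁻¹ - M⁻¹‖ * ‖M - A‖ := by
      rw [hκ]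
      nlinarith [norm_nonneg (A⁻¹ - M⁻¹), norm_nonneg (M - A),
        norm_nonneg (A⁻¹ : Matrix (Fin n) (Fin n) ℝ)]
    have h3 : κ * ‖A⁻¹ - M⁻¹‖ * ‖M - A‖ ≤ c * ‖M - A‖ := by
      have : κ * ‖A⁻¹ - M⁻¹‖ ≤ c := by
        rw [mul_comm]
        calc ‖A⁻¹ - M⁻¹‖ * κ ≤ (c / κ) * κ :=
          mul_le_mul_of_nonneg_right hM.le hκpos.le
        _ = c := div_mul_cancel₀ c hκpos.ne'
      exact mul_le_mul_of_nonneg_right this (norm_nonneg _)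
    linarith
  exact ho.congr' (Filter.eventuallyEq_of_mem hev fun M hM => (key M hM).symm)
    (EventuallyEq.refl _ _)

/-- The continuous linear map `H ↦ -(A⁻¹ H A⁻¹)`. -/
noncomputable def invDerivCLM (A : Matrix (Fin n) (Fin n) ℝ) :
    Matrix (Fin n) (Fin n) ℝ →L[ℝ] Matrix (Fin n) (Fin n) ℝ :=
  LinearMap.toContinuousLinearMap
    { toFun := fun H => -(A⁻¹ * H * A⁻¹)
      map_add' := fun H₁ H₂ => by
        simp only [Matrix.mul_add, Matrix.add_mul]; abel
      map_smul' := fun c H => by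
        simp [Matrix.mul_smul, Matrix.smul_mul] }

@[simp] lemma invDerivCLM_apply (A H : Matrix (Fin n) (Fin n) ℝ) :
    invDerivCLM A H = -(A⁻¹ * H * A⁻¹) := rfl

/-- The continuous linear map `N ↦ v ⬝ᵥ N *ᵥ v`. -/
noncomputable def dotCLM (v : Fin n → ℝ) :
    Matrix (Fin n) (Fin n) ℝ →L[ℝ] ℝ :=
  LinearMap.toContinuousLinearMap
    { toFun := fun N => v ⬝ᵥ N *ᵥ v
      map_add' := fun N₁ N₂ => by simp [Matrix.add_mulVec, dotProduct_add]
      map_smul' := fun c N => by simp [Matrix.smul_mulVec] }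

@[simp] lemma dotCLM_apply (v : Fin n → ℝ) (N : Matrix (Fin n) (Fin n) ℝ) :
    dotCLM v N = v ⬝ᵥ N *ᵥ v := rfl

/-- Derivative of the Gaussian kernel in the covariance matrix. -/
noncomputable def gaussDCLM (v mv : Fin n → ℝ) (A : Matrix (Fin n) (Fin n) ℝ) :
    Matrix (Fin n) (Fin n) ℝ →L[ℝ] ℝ :=
  gaussKer v mv A • (-((dotCLM (v - mv)).comp (invDerivCLM A)))

lemma gaussDCLM_apply (v mv : Fin n → ℝ) (A Γ : Matrix (Fin n) (Fin n) ℝ) :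
    gaussDCLM v mv A Γ
      = gaussKer v mv A * ((v - mv) ⬝ᵥ ((A⁻¹ * Γ * A⁻¹) *ᵥ (v - mv))) := by
  simp [gaussDCLM, Matrix.neg_mulVec]
  ring

lemma hasFDerivAt_gaussKer (v mv : Fin n → ℝ) (A : Matrix (Fin n) (Fin n) ℝ)
    (hA : A.det ≠ 0) :
    HasFDerivAt (fun M => gaussKer v mv M) (gaussDCLM v mv A) A := by
  have h1 : HasFDerivAt (fun M : Matrix (Fin n) (Fin n) ℝ => M⁻¹) (invDerivCLM A) A :=
    hasFDerivAt_matrix_inv A hA _ (fun H => rfl)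
  have h2 : HasFDerivAt (fun M : Matrix (Fin n) (Fin n) ℝ => (v - mv) ⬝ᵥ M⁻¹ *ᵥ (v - mv))
      ((dotCLM (v - mv)).comp (invDerivCLM A)) A :=
    (dotCLM (v - mv)).hasFDerivAt.comp A h1
  have h3 := h2.fun_neg
  have h4 := (Real.hasDerivAt_exp (-((v - mv) ⬝ᵥ A⁻¹ *ᵥ (v - mv)))).comp_hasFDerivAt A h3
  have : (Real.exp ∘ fun M : Matrix (Fin n) (Fin n) ℝ => -((v - mv) ⬝ᵥ M⁻¹ *ᵥ (v - mv)))
      = fun M => gaussKer v mv M := by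
    funext M; simp [gaussKer, Function.comp]
  rw [this] at h4
  exact h4

private lemma trace_transpose_mul_self_nonneg (M : Matrix (Fin n) (Fin n) ℝ) :
    0 ≤ (Mᵀ * M).trace := by
  rw [Matrix.trace]
  refine Finset.sum_nonneg fun i _ => ?_
  rw [Matrix.diag_apply, Matrix.mul_apply]
  exact Finset.sum_nonneg fun j _ => by
    simp only [Matrix.transpose_apply]; exact mul_self_nonneg _

private lemma eq_zero_of_trace_transpose_mul_self (M : Matrix (Fin n) (Fin n) ℝ)
    (h : (Mᵀ * M).trace = 0) : M = 0 := by
  rw [Matrix.trace] at h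
  have h1 := (Finset.sum_eq_zero_iff_of_nonneg (fun i _ => by
    rw [Matrix.diag_apply, Matrix.mul_apply]
    exact Finset.sum_nonneg fun j _ => by
      simp only [Matrix.transpose_apply]; exact mul_self_nonneg _)).mp h
  ext i j
  have h2 := h1 j (Finset.mem_univ j)
  rw [Matrix.diag_apply, Matrix.mul_apply] at h2
  have h3 := (Finset.sum_eq_zero_iff_of_nonneg (fun l _ => by
    simp only [Matrix.transpose_apply]; exact mul_self_nonneg _)).mp h2
  have := h3 i (Finset.mem_univ i)
  simp only [Matrix.transpose_apply] at this
  have := mul_self_eq_zero.mp this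
  simpa using this

open scoped MatrixOrder in
private lemma lyapunov_unique {Cm Y : Matrix (Fin n) (Fin n) ℝ} (hC : Cm.PosDef)
    (h : Cm * Y + Y * Cm = 0) : Y = 0 := by
  set S := CFC.sqrt Cm with hSdef
  have hSS : S * S = Cm := CFC.sqrt_mul_sqrt_self Cm hC.posSemidef.nonneg
  have hS : Sᵀ = S := by
    have h1 : Sᴴ = S := (CFC.sqrt_nonneg Cm).posSemidef.1
    simpa using h1
  have h0 : (Yᵀ * (Cm * Y)).trace + (Yᵀ * (Y * Cm)).trace = 0 := by
    have : Yᵀ * (Cm * Y + Y * Cm) = 0 := by rw [h, Matrix.mul_zero]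
    calc (Yᵀ * (Cm * Y)).trace + (Yᵀ * (Y * Cm)).trace
        = (Yᵀ * (Cm * Y + Y * Cm)).trace := by rw [Matrix.mul_add, Matrix.trace_add]
      _ = 0 := by rw [this, Matrix.trace_zero]
  have e1 : Yᵀ * (Cm * Y) = (S * Y)ᵀ * (S * Y) := by
    rw [← hSS, Matrix.transpose_mul, hS]
    noncomm_ring
  have e2 : (Yᵀ * (Y * Cm)).trace = ((Y * S)ᵀ * (Y * S)).trace := by
    rw [← hSS, Matrix.transpose_mul, hS]
    rw [show Yᵀ * (Y * (S * S)) = (Yᵀ * (Y * S)) * S by noncomm_ring,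
      Matrix.trace_mul_comm]
    noncomm_ring
  have hSY : S * Y = 0 := by
    apply eq_zero_of_trace_transpose_mul_self
    have nn1 := trace_transpose_mul_self_nonneg (S * Y)
    have nn2 := trace_transpose_mul_self_nonneg (Y * S)
    rw [e1] at h0
    rw [e2] at h0
    linarith
  have hCY : Cm * Y = 0 := by rw [← hSS, Matrix.mul_assoc, hSY, Matrix.mul_zero]
  have hdet : Cm.det ≠ 0 := hC.det_pos.ne'
  calc Y = (Cm⁻¹ * Cm) * Y := by
        rw [Matrix.nonsing_inv_mul Cm (isUnit_iff_ne_zero.mpr hdet), Matrix.one_mul]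
    _ = Cm⁻¹ * (Cm * Y) := by rw [Matrix.mul_assoc]
    _ = 0 := by rw [hCY, Matrix.mul_zero]

private lemma trace_vecMulVec_mul (u : Fin n → ℝ) (N : Matrix (Fin n) (Fin n) ℝ) :
    (vecMulVec u u * N).trace = u ⬝ᵥ N *ᵥ u := by
  rw [Matrix.trace, dotProduct]
  simp only [Matrix.diag_apply, Matrix.mul_apply, vecMulVec_apply, Matrix.mulVec, dotProduct]
  rw [Finset.sum_comm]
  refine Finset.sum_congr rfl fun i _ => ?_
  rw [Finset.mul_sum]
  refine Finset.sum_congr rfl fun j _ => by ring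

end Aux

section Main

variable {D K T : ℕ}

lemma hasFDerivAt_gmmQ_update (ξ : Fin K → ℝ) (m : Fin K → Fin D → ℝ)
    (C : Fin K → Matrix (Fin D) (Fin D) ℝ) (k : Fin K) (w : Fin D → ℝ)
    (hA : (C k).det ≠ 0) :
    HasFDerivAt (fun M => gmmQ ξ m (Function.update C k M) w)
      (ξ k • gaussDCLM w (m k) (C k)) (C k) := by
  have heq : (fun M => gmmQ ξ m (Function.update C k M) w)
      = fun M => ξ k * gaussKer w (m k) M
          + ∑ j ∈ Finset.univ.erase k, ξ j * gaussKer w (m j) (C j) := by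
    funext M
    rw [gmmQ, ← Finset.add_sum_erase _ _ (Finset.mem_univ k)]
    simp only [Function.update_self]
    congr 1
    exact Finset.sum_congr rfl fun j hj => by
      rw [Function.update_of_ne (Finset.ne_of_mem_erase hj)]
  rw [heq]
  exact ((hasFDerivAt_gaussKer w (m k) (C k) hA).const_mul (ξ k)).add_const _

lemma hasFDerivAt_loss (g : Fin T → ℝ) (z z' : Fin T → Fin D → ℝ) (α : ℝ)
    (ξ : Fin K → ℝ) (m : Fin K → Fin D → ℝ)
    (C : Fin K → Matrix (Fin D) (Fin D) ℝ) (k : Fin K)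
    (hA : (C k).det ≠ 0) :
    HasFDerivAt (fun M => bellmanLoss g z z' α ξ m (Function.update C k M))
      (∑ t, (2 * (g t + α * gmmQ ξ m C (z' t) - gmmQ ξ m C (z t))) •
        (α • (ξ k • gaussDCLM (z' t) (m k) (C k))
          - ξ k • gaussDCLM (z t) (m k) (C k))) (C k) := by
  have hfun : (fun M => bellmanLoss g z z' α ξ m (Function.update C k M))
      = fun M => ∑ t, (g t + α * gmmQ ξ m (Function.update C k M) (z' t)
          - gmmQ ξ m (Function.update C k M) (z t)) ^ 2 := rfl
  rw [hfun]
  refine HasFDerivAt.fun_sum fun t _ => ?_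
  have h1 := hasFDerivAt_gmmQ_update ξ m C k (z' t) hA
  have h2 := hasFDerivAt_gmmQ_update ξ m C k (z t) hA
  have h3 : HasFDerivAt (fun M => g t + α * gmmQ ξ m (Function.update C k M) (z' t)
      - gmmQ ξ m (Function.update C k M) (z t))
      (α • (ξ k • gaussDCLM (z' t) (m k) (C k)) - ξ k • gaussDCLM (z t) (m k) (C k)) (C k) :=
    ((h1.const_mul α).const_add (g t)).sub h2
  have h4 := h3.mul h3
  simp only [Function.update_eq_self, ← sq] at h4
  have : (2 * (g t + α * gmmQ ξ m C (z' t) - gmmQ ξ m C (z t))) •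
      (α • (ξ k • gaussDCLM (z' t) (m k) (C k)) - ξ k • gaussDCLM (z t) (m k) (C k))
      = (g t + α * gmmQ ξ m C (z' t) - gmmQ ξ m C (z t)) •
          (α • ξ k • gaussDCLM (z' t) (m k) (C k) - ξ k • gaussDCLM (z t) (m k) (C k))
        + (g t + α * gmmQ ξ m C (z' t) - gmmQ ξ m C (z t)) •
          (α • ξ k • gaussDCLM (z' t) (m k) (C k) - ξ k • gaussDCLM (z t) (m k) (C k)) := by
    rw [two_mul, add_smul]
  rw [this]
  exact h4



theorem stmt_10 (D T K : ℕ) (hT : 0 < T) (hK : 0 < K)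
    (z z' : Fin T → Fin D → ℝ) (g : Fin T → ℝ)
    (α : ℝ) (hα : α ∈ Set.Ico (0 : ℝ) 1)
    (ξ : Fin K → ℝ) (m : Fin K → Fin D → ℝ)
    (C : Fin K → Matrix (Fin D) (Fin D) ℝ)
    (hC : ∀ k, (C k).PosDef) (hCs : ∀ k, (C k).IsSymm)
    (δ : Fin T → ℝ)
    (hδ : ∀ t, δ t = g t + α * gmmQ ξ m C (z' t) - gmmQ ξ m C (z t))
    (k : Fin K)
    (B : Fin T → Matrix (Fin D) (Fin D) ℝ)
    (hB : ∀ t, B t =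
      (α * gaussKer (z' t) (m k) (C k)) • vecMulVec (z' t - m k) (z' t - m k)
        - gaussKer (z t) (m k) (C k) • vecMulVec (z t - m k) (z t - m k))
    (G : Matrix (Fin D) (Fin D) ℝ)
    (hG : G = ∑ t, (4 * δ t * ξ k) • ((C k)⁻¹ * B t + B t * (C k)⁻¹)) :
    G.IsSymm ∧
    DifferentiableAt ℝ
      (fun Ck : Matrix (Fin D) (Fin D) ℝ =>
        bellmanLoss g z z' α ξ m (Function.update C k Ck)) (C k) ∧
    ∀ (Γ X : Matrix (Fin D) (Fin D) ℝ), Γ.IsSymm →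
      C k * X + X * C k = G →
      (1 / 2 : ℝ) * (X * Γ).trace
        = fderiv ℝ
            (fun Ck : Matrix (Fin D) (Fin D) ℝ =>
              bellmanLoss g z z' α ξ m (Function.update C k Ck)) (C k) Γ := by
  have hdet : (C k).det ≠ 0 := (hC k).det_pos.ne'
  have hu : IsUnit (C k).det := isUnit_iff_ne_zero.mpr hdet
  have hCinv : ((C k)⁻¹)ᵀ = (C k)⁻¹ := by
    rw [Matrix.transpose_nonsing_inv, (hCs k).eq]
  have hBsymm : ∀ t, (B t)ᵀ = B t := by
    intro t; rw [hB t]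
    ext i j
    simp only [Matrix.transpose_apply, Matrix.sub_apply, Matrix.smul_apply, vecMulVec_apply,
      smul_eq_mul]
    ring
  refine ⟨?_, ?_, ?_⟩
  · show Gᵀ = G
    rw [hG, Matrix.transpose_sum]
    refine Finset.sum_congr rfl fun t _ => ?_
    rw [Matrix.transpose_smul, Matrix.transpose_add, Matrix.transpose_mul, Matrix.transpose_mul,
      hBsymm t, hCinv, add_comm]
  · exact (hasFDerivAt_loss g z z' α ξ m C k hdet).differentiableAt
  · intro Γ X hΓ hX
    have hL := hasFDerivAt_loss g z z' α ξ m C k hdet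
    rw [hL.fderiv]
    set X₀ : Matrix (Fin D) (Fin D) ℝ :=
      ∑ t, (4 * δ t * ξ k) • ((C k)⁻¹ * B t * (C k)⁻¹) with hX₀def
    have hX₀ : C k * X₀ + X₀ * C k = G := by
      rw [hX₀def, hG, Finset.mul_sum, Finset.sum_mul, ← Finset.sum_add_distrib]
      refine Finset.sum_congr rfl fun t _ => ?_
      rw [Matrix.mul_smul, Matrix.smul_mul, ← smul_add]
      congr 1
      have h1 : C k * ((C k)⁻¹ * B t * (C k)⁻¹) = B t * (C k)⁻¹ := by
        rw [← Matrix.mul_assoc, ← Matrix.mul_assoc, Matrix.mul_nonsing_inv _ hu,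
          Matrix.one_mul]
      have h2 : (C k)⁻¹ * B t * (C k)⁻¹ * C k = (C k)⁻¹ * B t := by
        rw [Matrix.mul_assoc, Matrix.nonsing_inv_mul _ hu, Matrix.mul_one]
      rw [h1, h2, add_comm]
    have hXeq : X = X₀ := by
      have h0 : C k * (X - X₀) + (X - X₀) * C k = 0 := by
        have e : C k * (X - X₀) + (X - X₀) * C k
            = (C k * X + X * C k) - (C k * X₀ + X₀ * C k) := by noncomm_ring
        rw [e, hX, hX₀, sub_self]
      exact sub_eq_zero.mp (lyapunov_unique (hC k) h0)
    set N : Matrix (Fin D) (Fin D) ℝ := (C k)⁻¹ * Γ * (C k)⁻¹ with hN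
    have cyc : ∀ P : Matrix (Fin D) (Fin D) ℝ,
        ((C k)⁻¹ * P * (C k)⁻¹ * Γ).trace = (P * N).trace := by
      intro P
      rw [show (C k)⁻¹ * P * (C k)⁻¹ * Γ = (C k)⁻¹ * (P * ((C k)⁻¹ * Γ)) by noncomm_ring,
        Matrix.trace_mul_comm, hN]
      congr 1
      noncomm_ring
    have htrace : (X * Γ).trace
        = ∑ t, (4 * δ t * ξ k) *
            ((α * gaussKer (z' t) (m k) (C k)) * ((z' t - m k) ⬝ᵥ N *ᵥ (z' t - m k))
              - gaussKer (z t) (m k) (C k) * ((z t - m k) ⬝ᵥ N *ᵥ (z t - m k))) := by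
      rw [hXeq, hX₀def, Finset.sum_mul, Matrix.trace_sum]
      refine Finset.sum_congr rfl fun t _ => ?_
      rw [Matrix.smul_mul, Matrix.trace_smul, smul_eq_mul]
      congr 1
      rw [cyc (B t), hB t, Matrix.sub_mul, Matrix.smul_mul, Matrix.smul_mul, Matrix.trace_sub,
        Matrix.trace_smul, Matrix.trace_smul, trace_vecMulVec_mul, trace_vecMulVec_mul,
        smul_eq_mul, smul_eq_mul]
    rw [htrace, ContinuousLinearMap.sum_apply]
    simp only [ContinuousLinearMap.smul_apply, ContinuousLinearMap.sub_apply, gaussDCLM_apply,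
      smul_eq_mul, ← hN, ← hδ]
    rw [Finset.mul_sum]
    exact Finset.sum_congr rfl fun t _ => by ring

end Main
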